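/- Realizability implies zero weak approximation error: if (u_A, w_A) is optimal for the dual LP, μ_{π_A} = Φθ_A for some θ_A ∈ Θ, and u_A = Ψλ_A for some λ_A ∈ Λ, then (θ_A, λ_A, w_A) is a saddle point of the linearly-relaxed problem min_{θ∈Θ} max_{λ∈Λ, w∈W} L_r(θ,λ,w). -/

import Mathlib

set_option linter.unusedSectionVars false
set_option maxHeartbeats 1000000


open Finset

variable {X A : Type*} [Fintype X] [Fintype A] [DecidableEq X] [DecidableEq A]
  [Nonempty X] [Nonempty A]

/-- A finite discounted Markov decision process. -/
structure FinMDP (X A : Type*) [Fintype X] [Fintype A] where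
  P : X → A → X → ℝ
  P_nonneg : ∀ x a x', 0 ≤ P x a x'
  P_sum : ∀ x a, ∑ x', P x a x' = 1
  ν : X → ℝ
  ν_nonneg : ∀ x, 0 ≤ ν x
  ν_sum : ∑ x, ν x = 1
  γ : ℝ
  γ_pos : 0 < γ
  γ_lt_one : γ < 1

/-- A stationary Markov policy. -/
def FinMDP.IsPolicy (π : X → A → ℝ) : Prop :=
  (∀ x a, 0 ≤ π x a) ∧ ∀ x, ∑ a, π x a = 1

namespace FinMDP

variable (M : FinMDP X A)

/-- The state-action distribution at time `t` of policy `π` started from `ν'`. -/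
noncomputable def saDist (ν' : X → ℝ) (π : X → A → ℝ) : ℕ → X × A → ℝ
  | 0 => fun p => ν' p.1 * π p.1 p.2
  | t + 1 => fun p => (∑ q : X × A, saDist ν' π t q * M.P q.1 q.2 p.1) * π p.1 p.2

/-- The normalized discounted occupancy measure of `π` started from `ν'`. -/
noncomputable def occFrom (ν' : X → ℝ) (π : X → A → ℝ) (p : X × A) : ℝ :=
  (1 - M.γ) * ∑' t : ℕ, M.γ ^ t * M.saDist ν' π t p

/-- The normalized discounted occupancy measure of `π` (from the initial distribution). -/
noncomputable def occ (π : X → A → ℝ) : X × A → ℝ :=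
  M.occFrom M.ν π

/-- The (normalized) value function of policy `π` for cost `c`. -/
noncomputable def value (c : X × A → ℝ) (π : X → A → ℝ) (x : X) : ℝ :=
  ∑ p : X × A, M.occFrom (fun y => if y = x then 1 else 0) π p * c p

/-- The total expected (normalized) discounted cost `ρ_c(π) = ⟨μ_π, c⟩`. -/
noncomputable def cost (c : X × A → ℝ) (π : X → A → ℝ) : ℝ :=
  ∑ p : X × A, M.occ π p * c p

/-- The Bellman flow operator `T_γ μ = (1/(1-γ)) (B - γ P)ᵀ μ`. -/
noncomputable def Tflow (μ : X × A → ℝ) (x' : X) : ℝ :=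
  (1 / (1 - M.γ)) * ((∑ a, μ (x', a)) - M.γ * ∑ p : X × A, μ p * M.P p.1 p.2 x')

/-- The adjoint operator `T*_γ u = (1/(1-γ)) (B - γ P) u`. -/
noncomputable def Tadj (u : X → ℝ) (p : X × A) : ℝ :=
  (1 / (1 - M.γ)) * (u p.1 - M.γ * ∑ x', M.P p.1 p.2 x' * u x')

/-- `π` is an optimal policy for the forward RL problem with cost `c`. -/
def IsOptimal (c : X × A → ℝ) (π : X → A → ℝ) : Prop :=
  IsPolicy π ∧ ∀ π', IsPolicy π' → M.cost c π ≤ M.cost c π'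

/-- The optimal value function `V*_c(x) = min_π V_c^π(x)`. -/
noncomputable def Vstar (c : X × A → ℝ) (x : X) : ℝ :=
  sInf {v | ∃ π, IsPolicy π ∧ v = M.value c π x}

end FinMDP

/-- The policy induced by a state-action distribution:
`π_μ(a|x) = μ(x,a) / ∑_{a'} μ(x,a')` (uniform on zero-mass states). -/
noncomputable def inducedPolicy (μ : X × A → ℝ) (x : X) (a : A) : ℝ :=
  if (∑ a' : A, μ (x, a')) = 0 then (1 : ℝ) / (Fintype.card A)
  else μ (x, a) / ∑ a' : A, μ (x, a')

/-- `μ` is a probability distribution on state-action pairs. -/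
def IsDist (μ : X × A → ℝ) : Prop := (∀ p, 0 ≤ μ p) ∧ ∑ p : X × A, μ p = 1

/-- Membership in the probability simplex `Δ_{[n]}`. -/
def simplexPt {n : ℕ} (w : Fin n → ℝ) : Prop := (∀ i, 0 ≤ w i) ∧ ∑ i, w i = 1

/-- The `ℓ¹` norm of a finitely supported vector. -/
noncomputable def l1 {ι : Type*} [Fintype ι] (f : ι → ℝ) : ℝ := ∑ i, |f i|

/-- The `ℓ∞` norm of a finitely supported vector. -/
noncomputable def linf {ι : Type*} [Fintype ι] [Nonempty ι] (f : ι → ℝ) : ℝ :=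
  Finset.univ.sup' Finset.univ_nonempty fun i => |f i|

/-- The cost `c_w = ∑ᵢ wᵢ cᵢ` parameterized by weights `w`. -/
noncomputable def costW {nc : ℕ} (c : Fin nc → X × A → ℝ) (w : Fin nc → ℝ) :
    X × A → ℝ :=
  fun p => ∑ i, w i * c i p

/-- The objective of the dual LP `(D_{π_E})`. -/
noncomputable def dualObj {nc : ℕ} (M : FinMDP X A) (c : Fin nc → X × A → ℝ)
    (πE : X → A → ℝ) (u : X → ℝ) (w : Fin nc → ℝ) : ℝ :=
  ∑ p : X × A, M.occ πE p * (M.Tadj u p - costW c w p)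

/-- Feasibility for the dual LP `(D_{π_E})`. -/
def dualFeasible {nc : ℕ} (M : FinMDP X A) (c : Fin nc → X × A → ℝ)
    (u : X → ℝ) (w : Fin nc → ℝ) : Prop :=
  simplexPt w ∧ ∀ p, 0 ≤ costW c w p - M.Tadj u p

/-- Optimality for the dual LP `(D_{π_E})`. -/
def dualOptimal {nc : ℕ} (M : FinMDP X A) (c : Fin nc → X × A → ℝ)
    (πE : X → A → ℝ) (u : X → ℝ) (w : Fin nc → ℝ) : Prop :=
  dualFeasible M c u w ∧
    ∀ u' w', dualFeasible M c u' w' → dualObj M c πE u' w' ≤ dualObj M c πE u w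

/-- The `C`-distance `δ_C(π, π_E) = max_i (ρ_{c_i}(π) - ρ_{c_i}(π_E))`. -/
noncomputable def gapMax {nc : ℕ} [NeZero nc] (M : FinMDP X A)
    (c : Fin nc → X × A → ℝ) (πE π : X → A → ℝ) : ℝ :=
  haveI : Nonempty (Fin nc) := ⟨⟨0, Nat.pos_of_ne_zero (NeZero.ne nc)⟩⟩
  Finset.univ.sup' Finset.univ_nonempty fun i => M.cost (c i) π - M.cost (c i) πE

/-- `π_A` is an apprentice policy: it minimizes `δ_C(·, π_E)` over stationary policies. -/
def IsApprentice {nc : ℕ} [NeZero nc] (M : FinMDP X A)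
    (c : Fin nc → X × A → ℝ) (πE πA : X → A → ℝ) : Prop :=
  FinMDP.IsPolicy πA ∧
    ∀ π, FinMDP.IsPolicy π → gapMax M c πE πA ≤ gapMax M c πE π

/-- The parameter set `Λ = {λ : ‖λ‖₂ ≤ β/√n_u}`. -/
def lamSet (nu : ℕ) (β : ℝ) : Set (Fin nu → ℝ) :=
  {l | Real.sqrt (∑ k, l k ^ 2) ≤ β / Real.sqrt nu}

/-- The reduced Lagrangian `L_r(θ, λ, w) = ⟨μ_θ - μ_{π_E}, c_w - T*_γ u_λ⟩`. -/
noncomputable def Lr {nm nu nc : ℕ} (M : FinMDP X A)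
    (Φ : Fin nm → X × A → ℝ) (Ψ : Fin nu → X → ℝ) (c : Fin nc → X × A → ℝ)
    (πE : X → A → ℝ) (θ : Fin nm → ℝ) (lam : Fin nu → ℝ) (w : Fin nc → ℝ) : ℝ :=
  ∑ p : X × A, ((∑ i, θ i * Φ i p) - M.occ πE p) *
    ((∑ j, w j * c j p) - M.Tadj (fun x => ∑ k, lam k * Ψ k x) p)

/-- The saddle-point residual of a point `(θ, λ, w)` for the reduced Lagrangian. -/
noncomputable def epsSad {nm nu nc : ℕ} (M : FinMDP X A)
    (Φ : Fin nm → X × A → ℝ) (Ψ : Fin nu → X → ℝ) (c : Fin nc → X × A → ℝ)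
    (πE : X → A → ℝ) (β : ℝ)
    (θ : Fin nm → ℝ) (lam : Fin nu → ℝ) (w : Fin nc → ℝ) : ℝ :=
  sSup {v | ∃ lam' ∈ lamSet nu β, ∃ w', simplexPt w' ∧ v = Lr M Φ Ψ c πE θ lam' w'} -
    sInf {v | ∃ θ', simplexPt θ' ∧ v = Lr M Φ Ψ c πE θ' lam w}

namespace FinMDP
variable (M : FinMDP X A)

-- ===================== NEW MATERIAL =====================

lemma one_sub_gamma_pos : (0:ℝ) < 1 - M.γ := sub_pos.mpr M.γ_lt_one

variable {π : X → A → ℝ}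

lemma saDist_zero (p : X × A) : M.saDist M.ν π 0 p = M.ν p.1 * π p.1 p.2 := rfl

lemma saDist_succ (t : ℕ) (p : X × A) :
    M.saDist M.ν π (t+1) p
      = (∑ q : X × A, M.saDist M.ν π t q * M.P q.1 q.2 p.1) * π p.1 p.2 := rfl

lemma saDist_nonneg (hπ : IsPolicy π) (t : ℕ) (p : X × A) :
    0 ≤ M.saDist M.ν π t p := by
  induction t generalizing p with
  | zero => exact mul_nonneg (M.ν_nonneg _) (hπ.1 _ _)
  | succ t ih =>
      exact mul_nonneg (Finset.sum_nonneg fun q _ =>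
        mul_nonneg (ih q) (M.P_nonneg _ _ _)) (hπ.1 _ _)

lemma saDist_marg_zero (hπ : IsPolicy π) (x : X) :
    ∑ a, M.saDist M.ν π 0 (x, a) = M.ν x := by
  simp only [saDist_zero, ← Finset.mul_sum]
  rw [hπ.2 x, mul_one]

lemma saDist_marg_succ (hπ : IsPolicy π) (t : ℕ) (x : X) :
    ∑ a, M.saDist M.ν π (t+1) (x, a)
      = ∑ q : X × A, M.saDist M.ν π t q * M.P q.1 q.2 x := by
  simp only [saDist_succ, ← Finset.mul_sum]
  rw [hπ.2 x, mul_one]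

lemma saDist_total (hπ : IsPolicy π) (t : ℕ) :
    ∑ p : X × A, M.saDist M.ν π t p = 1 := by
  induction t with
  | zero =>
      rw [Fintype.sum_prod_type]
      simp only [saDist_marg_zero M hπ]
      exact M.ν_sum
  | succ t ih =>
      rw [Fintype.sum_prod_type]
      simp only [saDist_marg_succ M hπ]
      rw [Finset.sum_comm]
      calc ∑ q : X × A, ∑ x, M.saDist M.ν π t q * M.P q.1 q.2 x
          = ∑ q : X × A, M.saDist M.ν π t q := by
            refine Finset.sum_congr rfl fun q _ => ?_
            rw [← Finset.mul_sum, M.P_sum, mul_one]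
        _ = 1 := ih

lemma saDist_le_one (hπ : IsPolicy π) (t : ℕ) (p : X × A) :
    M.saDist M.ν π t p ≤ 1 := by
  have h := M.saDist_total hπ t
  calc M.saDist M.ν π t p
      ≤ ∑ q : X × A, M.saDist M.ν π t q :=
        Finset.single_le_sum (fun q _ => M.saDist_nonneg hπ t q) (Finset.mem_univ p)
    _ = 1 := h

lemma saDist_summable (hπ : IsPolicy π) (p : X × A) :
    Summable (fun t : ℕ => M.γ ^ t * M.saDist M.ν π t p) := by
  refine Summable.of_nonneg_of_le
    (fun t => mul_nonneg (pow_nonneg M.γ_pos.le t) (M.saDist_nonneg hπ t p))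
    (fun t => ?_) (summable_geometric_of_lt_one M.γ_pos.le M.γ_lt_one)
  calc M.γ ^ t * M.saDist M.ν π t p
      ≤ M.γ ^ t * 1 := by
        exact mul_le_mul_of_nonneg_left (M.saDist_le_one hπ t p) (pow_nonneg M.γ_pos.le t)
    _ = M.γ ^ t := mul_one _

lemma occ_nonneg (hπ : IsPolicy π) (p : X × A) : 0 ≤ M.occ π p :=
  mul_nonneg (M.one_sub_gamma_pos).le <| tsum_nonneg fun t =>
    mul_nonneg (pow_nonneg M.γ_pos.le t) (M.saDist_nonneg hπ t p)

lemma occ_total (hπ : IsPolicy π) : ∑ p : X × A, M.occ π p = 1 := by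
  unfold occ occFrom
  rw [← Finset.mul_sum, ← Summable.tsum_finsetSum (fun p _ => M.saDist_summable hπ p)]
  have : ∀ t : ℕ, ∑ p : X × A, M.γ ^ t * M.saDist M.ν π t p = M.γ ^ t := by
    intro t; rw [← Finset.mul_sum, M.saDist_total hπ, mul_one]
  rw [tsum_congr this, tsum_geometric_of_lt_one M.γ_pos.le M.γ_lt_one]
  rw [mul_inv_cancel₀ M.one_sub_gamma_pos.ne']

lemma occ_marg (hπ : IsPolicy π) (x : X) :
    ∑ a, M.occ π (x, a)
      = (1 - M.γ) * M.ν x + M.γ * ∑ p : X × A, M.occ π p * M.P p.1 p.2 x := by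
  unfold occ occFrom
  rw [← Finset.mul_sum, ← Summable.tsum_finsetSum (fun a _ => M.saDist_summable hπ (x, a))]
  have hsum : Summable (fun t : ℕ => ∑ a, M.γ ^ t * M.saDist M.ν π t (x, a)) :=
    summable_sum (fun a _ => M.saDist_summable hπ (x, a))
  rw [Summable.tsum_eq_zero_add hsum]
  have h0 : ∑ a, M.γ ^ 0 * M.saDist M.ν π 0 (x, a) = M.ν x := by
    simp only [pow_zero, one_mul]; exact M.saDist_marg_zero hπ x
  have h1 : ∀ t : ℕ, ∑ a, M.γ ^ (t+1) * M.saDist M.ν π (t+1) (x, a)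
      = M.γ * ∑ q : X × A, (M.γ ^ t * M.saDist M.ν π t q) * M.P q.1 q.2 x := by
    intro t
    rw [← Finset.mul_sum, M.saDist_marg_succ hπ t x]
    simp only [Finset.mul_sum]
    refine Finset.sum_congr rfl fun q _ => by ring
  rw [tsum_congr h1, h0]
  rw [tsum_mul_left]
  have h2 : ∑' t : ℕ, ∑ q : X × A, (M.γ ^ t * M.saDist M.ν π t q) * M.P q.1 q.2 x
      = ∑ q : X × A, (∑' t : ℕ, M.γ ^ t * M.saDist M.ν π t q) * M.P q.1 q.2 x := by
    rw [Summable.tsum_finsetSum (fun q _ => (M.saDist_summable hπ q).mul_right _)]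
    exact Finset.sum_congr rfl fun q _ => (tsum_mul_right)
  rw [h2]
  rw [mul_add]
  congr 1
  simp only [Finset.mul_sum]
  exact Finset.sum_congr rfl fun q _ => by ring

lemma occ_factor (hπ : IsPolicy π) (x : X) (a : A) :
    M.occ π (x, a) = (∑ a', M.occ π (x, a')) * π x a := by
  have key : ∀ t : ℕ, M.saDist M.ν π t (x, a)
      = (∑ a', M.saDist M.ν π t (x, a')) * π x a := by
    intro t
    cases t with
    | zero => rw [M.saDist_marg_zero hπ x]; rfl
    | succ t => rw [M.saDist_marg_succ hπ t x]; rfl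
  have hmarg : ∑ a', M.occ π (x, a')
      = (1 - M.γ) * ∑' t : ℕ, M.γ ^ t * ∑ a', M.saDist M.ν π t (x, a') := by
    unfold occ occFrom
    rw [← Finset.mul_sum, ← Summable.tsum_finsetSum (fun a' _ => M.saDist_summable hπ (x, a'))]
    congr 1
    exact tsum_congr fun t => (Finset.mul_sum _ _ _).symm
  rw [hmarg]
  show (1 - M.γ) * ∑' t : ℕ, M.γ ^ t * M.saDist M.ν π t (x, a) = _
  have step : ∀ t : ℕ, M.γ ^ t * M.saDist M.ν π t (x, a)
      = (M.γ ^ t * ∑ a', M.saDist M.ν π t (x, a')) * π x a := by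
    intro t; rw [key t]; ring
  rw [tsum_congr step, tsum_mul_right]
  ring


lemma Tflow_occ (hπ : IsPolicy π) : M.Tflow (M.occ π) = M.ν := by
  funext x
  unfold Tflow
  rw [M.occ_marg hπ x]
  have : (1 - M.γ) * M.ν x + M.γ * (∑ p : X × A, M.occ π p * M.P p.1 p.2 x)
      - M.γ * ∑ p : X × A, M.occ π p * M.P p.1 p.2 x = (1 - M.γ) * M.ν x := by ring
  rw [this]
  rw [one_div, inv_mul_eq_div, mul_div_cancel_left₀ _ M.one_sub_gamma_pos.ne']

lemma sum_mul_Tadj (μ : X × A → ℝ) (u : X → ℝ) :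
    ∑ p : X × A, μ p * M.Tadj u p = ∑ x, M.Tflow μ x * u x := by
  unfold Tadj Tflow
  have swap : ∑ p : X × A, μ p * ∑ x', M.P p.1 p.2 x' * u x'
      = ∑ x', (∑ p : X × A, μ p * M.P p.1 p.2 x') * u x' := by
    simp only [Finset.mul_sum, Finset.sum_mul]
    rw [Finset.sum_comm]
    exact Finset.sum_congr rfl fun p _ => Finset.sum_congr rfl fun x' _ => by ring
  have marg : ∑ p : X × A, μ p * u p.1 = ∑ x, (∑ a, μ (x, a)) * u x := by
    rw [Fintype.sum_prod_type]
    refine Finset.sum_congr rfl fun x _ => ?_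
    rw [Finset.sum_mul]
  calc ∑ p : X × A, μ p * ((1 / (1 - M.γ)) * (u p.1 - M.γ * ∑ x', M.P p.1 p.2 x' * u x'))
      = (1 / (1 - M.γ)) * ((∑ p : X × A, μ p * u p.1)
          - M.γ * ∑ p : X × A, μ p * ∑ x', M.P p.1 p.2 x' * u x') := by
        simp only [Finset.mul_sum, mul_sub, ← Finset.sum_sub_distrib]
        exact Finset.sum_congr rfl fun p _ => by ring
    _ = (1 / (1 - M.γ)) * ((∑ x, (∑ a, μ (x, a)) * u x)
          - M.γ * ∑ x', (∑ p : X × A, μ p * M.P p.1 p.2 x') * u x') := by rw [swap, marg]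
    _ = ∑ x, (1 / (1 - M.γ)) * ((∑ a, μ (x, a)) - M.γ * ∑ p : X × A, μ p * M.P p.1 p.2 x) * u x := by
        simp only [Finset.mul_sum, mul_sub, ← Finset.sum_sub_distrib, Finset.sum_mul]
        refine Finset.sum_congr rfl fun x _ => ?_
        rw [sub_mul, Finset.sum_mul, Finset.sum_mul]
        congr 1
        · exact Finset.sum_congr rfl fun a _ => by ring
        · exact Finset.sum_congr rfl fun p _ => by ring

end FinMDP

namespace FinMDP
variable (M : FinMDP X A)

lemma inducedPolicy_isPolicy (μ : X × A → ℝ) (hpos : ∀ p, 0 ≤ μ p) :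
    IsPolicy (inducedPolicy μ) := by
  constructor
  · intro x a
    unfold inducedPolicy
    split
    · positivity
    · have h0 : 0 ≤ ∑ a' : A, μ (x, a') := Finset.sum_nonneg fun a' _ => hpos _
      exact div_nonneg (hpos _) h0
  · intro x
    unfold inducedPolicy
    split
    · rw [Finset.sum_const, Finset.card_univ, nsmul_eq_mul]
      rw [mul_one_div, div_self]
      exact_mod_cast Fintype.card_ne_zero
    · rw [← Finset.sum_div, div_self]
      assumption

lemma flow_marg (μ : X × A → ℝ) (hflow : M.Tflow μ = M.ν) (x : X) :
    ∑ a, μ (x, a) = (1 - M.γ) * M.ν x + M.γ * ∑ p : X × A, μ p * M.P p.1 p.2 x := by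
  have h := congrFun hflow x
  unfold Tflow at h
  have hγ : (1 : ℝ) - M.γ ≠ 0 := M.one_sub_gamma_pos.ne'
  field_simp at h
  linarith [h]

lemma induced_factor (μ : X × A → ℝ) (hpos : ∀ p, 0 ≤ μ p) (x : X) (a : A) :
    μ (x, a) = (∑ a', μ (x, a')) * inducedPolicy μ x a := by
  unfold inducedPolicy
  split
  · rename_i h
    have : μ (x, a) = 0 := by
      have := (Finset.sum_eq_zero_iff_of_nonneg (fun a' _ => hpos (x, a'))).mp h
      exact this a (Finset.mem_univ a)
    rw [this, h, zero_mul]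
  · rename_i h
    field_simp

lemma occ_of_flow (μ : X × A → ℝ) (hpos : ∀ p, 0 ≤ μ p) (hflow : M.Tflow μ = M.ν) :
    M.occ (inducedPolicy μ) = μ := by
  set π := inducedPolicy μ with hπdef
  have hπ : IsPolicy π := inducedPolicy_isPolicy μ hpos
  set h : X × A → ℝ := fun p => M.occ π p - μ p with hdef
  have hmargh : ∀ x, ∑ a, h (x, a) = M.γ * ∑ p : X × A, h p * M.P p.1 p.2 x := by
    intro x
    simp only [hdef, Finset.sum_sub_distrib, sub_mul]
    rw [M.occ_marg hπ x, M.flow_marg μ hflow x]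
    ring
  have hfacth : ∀ x a, h (x, a) = (∑ a', h (x, a')) * π x a := by
    intro x a
    simp only [hdef, Finset.sum_sub_distrib, sub_mul]
    rw [← M.occ_factor hπ x a, ← induced_factor μ hpos x a]
  have key : ∑ p : X × A, |h p| ≤ M.γ * ∑ p : X × A, |h p| := by
    calc ∑ p : X × A, |h p| = ∑ x, ∑ a, |h (x, a)| := by rw [Fintype.sum_prod_type]
      _ = ∑ x, ∑ a, |∑ a', h (x, a')| * π x a := by
          refine Finset.sum_congr rfl fun x _ => Finset.sum_congr rfl fun a _ => ?_
          rw [hfacth x a, abs_mul, abs_of_nonneg (hπ.1 x a)]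
      _ = ∑ x, |∑ a', h (x, a')| := by
          refine Finset.sum_congr rfl fun x _ => ?_
          rw [← Finset.mul_sum, hπ.2 x, mul_one]
      _ = ∑ x, |M.γ * ∑ p : X × A, h p * M.P p.1 p.2 x| := by
          refine Finset.sum_congr rfl fun x _ => ?_
          rw [hmargh x]
      _ ≤ ∑ x, M.γ * ∑ p : X × A, |h p| * M.P p.1 p.2 x := by
          refine Finset.sum_le_sum fun x _ => ?_
          rw [abs_mul, abs_of_nonneg M.γ_pos.le]
          refine mul_le_mul_of_nonneg_left ?_ M.γ_pos.le
          refine (Finset.abs_sum_le_sum_abs _ _).trans ?_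
          refine Finset.sum_le_sum fun p _ => ?_
          rw [abs_mul, abs_of_nonneg (M.P_nonneg _ _ _)]
      _ = M.γ * ∑ p : X × A, |h p| := by
          rw [← Finset.mul_sum, Finset.sum_comm]
          congr 1
          refine Finset.sum_congr rfl fun p _ => ?_
          rw [← Finset.mul_sum, M.P_sum, mul_one]
  have hnn : 0 ≤ ∑ p : X × A, |h p| := Finset.sum_nonneg fun p _ => abs_nonneg _
  have hz : ∑ p : X × A, |h p| = 0 := by nlinarith [M.γ_lt_one]
  funext p
  have := (Finset.sum_eq_zero_iff_of_nonneg (fun p _ => abs_nonneg (h p))).mp hz p (Finset.mem_univ p)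
  have := abs_eq_zero.mp this
  have : M.occ π p - μ p = 0 := this
  linarith

end FinMDP


namespace FinMDP
variable (M : FinMDP X A)

noncomputable def bellOp (c : X × A → ℝ) (u : X → ℝ) (x : X) : ℝ :=
  Finset.univ.inf' Finset.univ_nonempty
    fun a => (1 - M.γ) * c (x, a) + M.γ * ∑ x', M.P x a x' * u x'

lemma abs_inf'_sub_inf'_le {s : Finset A} (hs : s.Nonempty) (f g : A → ℝ) (c : ℝ)
    (h : ∀ a ∈ s, |f a - g a| ≤ c) : |s.inf' hs f - s.inf' hs g| ≤ c := by
  rw [abs_sub_le_iff]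
  constructor
  · obtain ⟨a0, ha0s, ha0⟩ := Finset.exists_mem_eq_inf' hs g
    have h1 : s.inf' hs f ≤ f a0 := Finset.inf'_le f ha0s
    have h2 := (abs_le.mp (h a0 ha0s)).2
    rw [ha0]; linarith
  · obtain ⟨a0, ha0s, ha0⟩ := Finset.exists_mem_eq_inf' hs f
    have h1 : s.inf' hs g ≤ g a0 := Finset.inf'_le g ha0s
    have h2 := (abs_le.mp (h a0 ha0s)).1
    rw [ha0]; linarith

lemma bellOp_contract (c : X × A → ℝ) (u v : X → ℝ) :
    dist (M.bellOp c u) (M.bellOp c v) ≤ M.γ * dist u v := by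
  rw [dist_pi_le_iff (mul_nonneg M.γ_pos.le dist_nonneg)]
  intro x
  rw [Real.dist_eq]
  refine abs_inf'_sub_inf'_le _ _ _ _ fun a _ => ?_
  have hdiff : ((1 - M.γ) * c (x, a) + M.γ * ∑ x', M.P x a x' * u x')
      - ((1 - M.γ) * c (x, a) + M.γ * ∑ x', M.P x a x' * v x')
      = M.γ * ∑ x', M.P x a x' * (u x' - v x') := by
    have : ∑ x', M.P x a x' * (u x' - v x')
        = (∑ x', M.P x a x' * u x') - ∑ x', M.P x a x' * v x' := by
      rw [← Finset.sum_sub_distrib]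
      exact Finset.sum_congr rfl fun _ _ => by ring
    rw [this]; ring
  rw [hdiff, abs_mul, abs_of_nonneg M.γ_pos.le]
  refine mul_le_mul_of_nonneg_left ?_ M.γ_pos.le
  calc |∑ x', M.P x a x' * (u x' - v x')|
      ≤ ∑ x', |M.P x a x' * (u x' - v x')| := Finset.abs_sum_le_sum_abs _ _
    _ ≤ ∑ x', M.P x a x' * dist u v := by
        refine Finset.sum_le_sum fun x' _ => ?_
        rw [abs_mul, abs_of_nonneg (M.P_nonneg _ _ _)]
        refine mul_le_mul_of_nonneg_left ?_ (M.P_nonneg _ _ _)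
        rw [← Real.dist_eq]
        exact dist_le_pi_dist u v x'
    _ = dist u v := by rw [← Finset.sum_mul, M.P_sum, one_mul]

lemma exists_dual_feasible_value (c : X × A → ℝ) :
    ∃ (u : X → ℝ) (π : X → A → ℝ), IsPolicy π ∧ (∀ p, M.Tadj u p ≤ c p) ∧
      ∑ p : X × A, M.occ π p * c p = ∑ x, M.ν x * u x := by
  -- fixed point of the Bellman operator
  have hK : (⟨M.γ, M.γ_pos.le⟩ : NNReal) < 1 := by
    exact NNReal.coe_lt_coe.mp M.γ_lt_one
  have hLip : LipschitzWith ⟨M.γ, M.γ_pos.le⟩ (M.bellOp c) :=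
    LipschitzWith.of_dist_le_mul fun u v => M.bellOp_contract c u v
  have hcontr : ContractingWith ⟨M.γ, M.γ_pos.le⟩ (M.bellOp c) := ⟨hK, hLip⟩
  set V := hcontr.fixedPoint (M.bellOp c) with hVdef
  have hV : M.bellOp c V = V := hcontr.fixedPoint_isFixedPt
  have hVx : ∀ x, V x = Finset.univ.inf' Finset.univ_nonempty
      (fun a => (1 - M.γ) * c (x, a) + M.γ * ∑ x', M.P x a x' * V x') := by
    intro x
    conv_lhs => rw [← hV]
    rfl
  -- greedy action
  have hgreedy : ∀ x : X, ∃ a : A, V x = (1 - M.γ) * c (x, a) + M.γ * ∑ x', M.P x a x' * V x' := by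
    intro x
    obtain ⟨a, _, ha⟩ := Finset.exists_mem_eq_inf' (Finset.univ_nonempty (α := A))
      (fun a => (1 - M.γ) * c (x, a) + M.γ * ∑ x', M.P x a x' * V x')
    exact ⟨a, by rw [hVx x, ha]⟩
  choose astar hastar using hgreedy
  set π : X → A → ℝ := fun x a => if a = astar x then 1 else 0 with hπdef
  have hπ : IsPolicy π := by
    constructor
    · intro x a; dsimp [π]; split <;> norm_num
    · intro x; dsimp [π]; rw [Finset.sum_ite_eq' Finset.univ (astar x) (fun _ => (1:ℝ))]
      simp
  refine ⟨V, π, hπ, ?_, ?_⟩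
  · intro p
    have hle : V p.1 ≤ (1 - M.γ) * c p + M.γ * ∑ x', M.P p.1 p.2 x' * V x' := by
      rw [hVx p.1]
      exact Finset.inf'_le _ (Finset.mem_univ p.2)
    unfold Tadj
    rw [one_div, inv_mul_le_iff₀ M.one_sub_gamma_pos]
    linarith
  · have hocczero : ∀ p : X × A, p.2 ≠ astar p.1 → M.occ π p = 0 := by
      intro p hp
      have := M.occ_factor hπ p.1 p.2
      rw [show π p.1 p.2 = 0 from by simp [π, hp]] at this
      simpa using this
    have hTadj_eq : ∀ x, M.Tadj V (x, astar x) = c (x, astar x) := by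
      intro x
      unfold Tadj
      have := hastar x
      rw [one_div, inv_mul_eq_iff_eq_mul₀ M.one_sub_gamma_pos.ne']
      dsimp only
      linarith [hastar x]
    have step : ∑ p : X × A, M.occ π p * c p = ∑ p : X × A, M.occ π p * M.Tadj V p := by
      refine Finset.sum_congr rfl fun p _ => ?_
      by_cases hp : p.2 = astar p.1
      · have : p = (p.1, astar p.1) := by rw [← hp]
        rw [this, hTadj_eq p.1]
      · rw [hocczero p hp, zero_mul, zero_mul]
    rw [step, M.sum_mul_Tadj (M.occ π) V, M.Tflow_occ hπ]

end FinMDP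



section Stage4
open Pointwise

variable (M : FinMDP X A)

/-- The flow polytope. -/
def flowSet : Set (X × A → ℝ) := {μ | (∀ p, 0 ≤ μ p) ∧ M.Tflow μ = M.ν}

lemma flowSet_occ {π : X → A → ℝ} (hπ : FinMDP.IsPolicy π) : M.occ π ∈ flowSet M :=
  ⟨M.occ_nonneg hπ, M.Tflow_occ hπ⟩

lemma flowSet_total {μ : X × A → ℝ} (hμ : μ ∈ flowSet M) : ∑ p : X × A, μ p = 1 := by
  have e : ∑ p : X × A, μ p = (1 - M.γ) + M.γ * ∑ p : X × A, μ p := by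
    calc ∑ p : X × A, μ p = ∑ x, ∑ a, μ (x, a) := Fintype.sum_prod_type _
      _ = ∑ x, ((1 - M.γ) * M.ν x + M.γ * ∑ p : X × A, μ p * M.P p.1 p.2 x) :=
          Finset.sum_congr rfl fun x _ => M.flow_marg μ hμ.2 x
      _ = (1 - M.γ) * ∑ x, M.ν x + M.γ * ∑ x, ∑ p : X × A, μ p * M.P p.1 p.2 x := by
          rw [Finset.sum_add_distrib, Finset.mul_sum, Finset.mul_sum]
      _ = (1 - M.γ) + M.γ * ∑ p : X × A, μ p := by
          rw [M.ν_sum, mul_one, Finset.sum_comm]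
          congr 1
          refine congrArg _ (Finset.sum_congr rfl fun p _ => ?_)
          rw [← Finset.mul_sum, M.P_sum, mul_one]
  have : (1 - M.γ) * (∑ p : X × A, μ p) = (1 - M.γ) * 1 := by linarith
  exact mul_left_cancel₀ M.one_sub_gamma_pos.ne' this

lemma flowSet_compact : IsCompact (flowSet M) := by
  have hclosed : IsClosed (flowSet M) := by
    have : flowSet M = (⋂ p : X × A, {μ : X × A → ℝ | 0 ≤ μ p})
        ∩ ⋂ x : X, {μ : X × A → ℝ | M.Tflow μ x = M.ν x} := by
      ext μ
      simp only [flowSet, Set.mem_setOf_eq, Set.mem_inter_iff, Set.mem_iInter]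
      constructor
      · rintro ⟨h1, h2⟩; exact ⟨h1, fun x => congrFun h2 x⟩
      · rintro ⟨h1, h2⟩; exact ⟨h1, funext h2⟩
    rw [this]
    refine IsClosed.inter (isClosed_iInter fun p => isClosed_le continuous_const (continuous_apply p))
      (isClosed_iInter fun x => ?_)
    refine isClosed_eq ?_ continuous_const
    unfold FinMDP.Tflow
    refine Continuous.mul continuous_const (Continuous.sub ?_ (Continuous.mul continuous_const ?_))
    · exact continuous_finset_sum _ fun a _ => continuous_apply (x, a)
    · exact continuous_finset_sum _ fun p _ => (continuous_apply p).mul continuous_const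
  have hsub : flowSet M ⊆ Set.pi Set.univ fun _ : X × A => Set.Icc (0:ℝ) 1 := by
    intro μ hμ
    rw [Set.mem_pi]
    intro p _
    refine ⟨hμ.1 p, ?_⟩
    calc μ p ≤ ∑ q : X × A, μ q :=
          Finset.single_le_sum (fun q _ => hμ.1 q) (Finset.mem_univ p)
      _ = 1 := flowSet_total M hμ
  exact (isCompact_univ_pi fun _ => isCompact_Icc).of_isClosed_subset hclosed hsub

variable {nc : ℕ} (c : Fin nc → X × A → ℝ) (πE : X → A → ℝ)

/-- The per-constraint cost gaps of `μ` against `π_E`. -/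
noncomputable def hvec (μ : X × A → ℝ) (j : Fin nc) : ℝ :=
  ∑ p : X × A, (μ p - M.occ πE p) * c j p

lemma hvec_cont : Continuous (hvec M c πE) := by
  refine continuous_pi fun j => continuous_finset_sum _ fun p _ => ?_
  exact ((continuous_apply p).sub continuous_const).mul continuous_const

lemma hvec_split (μ : X × A → ℝ) (j : Fin nc) :
    hvec M c πE μ j = (∑ p : X × A, μ p * c j p) - ∑ p : X × A, M.occ πE p * c j p := by
  unfold hvec
  rw [← Finset.sum_sub_distrib]
  exact Finset.sum_congr rfl fun p _ => by ring

/-- The "upper image" set used in the separation argument. -/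
def upC : Set (Fin nc → ℝ) := {y | ∃ μ ∈ flowSet M, ∀ j, hvec M c πE μ j ≤ y j}

lemma upC_convex : Convex ℝ (upC M c πE) := by
  rintro y1 ⟨μ1, hμ1, hle1⟩ y2 ⟨μ2, hμ2, hle2⟩ a b ha hb hab
  refine ⟨a • μ1 + b • μ2, ⟨?_, ?_⟩, ?_⟩
  · intro p
    simp only [Pi.add_apply, Pi.smul_apply, smul_eq_mul]
    have := hμ1.1 p; have := hμ2.1 p
    positivity
  · funext x
    show M.Tflow (a • μ1 + b • μ2) x = M.ν x
    unfold FinMDP.Tflow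
    have e1 : ∑ a', (a • μ1 + b • μ2) (x, a')
        = a * ∑ a', μ1 (x, a') + b * ∑ a', μ2 (x, a') := by
      simp [Finset.sum_add_distrib, Finset.mul_sum]
    have e2 : ∑ p : X × A, (a • μ1 + b • μ2) p * M.P p.1 p.2 x
        = a * (∑ p : X × A, μ1 p * M.P p.1 p.2 x)
          + b * ∑ p : X × A, μ2 p * M.P p.1 p.2 x := by
      simp only [Pi.add_apply, Pi.smul_apply, smul_eq_mul, Finset.mul_sum,
        ← Finset.sum_add_distrib]
      exact Finset.sum_congr rfl fun p _ => by ring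
    rw [e1, e2, M.flow_marg μ1 hμ1.2 x, M.flow_marg μ2 hμ2.2 x]
    rw [show a * ((1 - M.γ) * M.ν x + M.γ * ∑ p : X × A, μ1 p * M.P p.1 p.2 x)
        + b * ((1 - M.γ) * M.ν x + M.γ * ∑ p : X × A, μ2 p * M.P p.1 p.2 x)
        - M.γ * (a * (∑ p : X × A, μ1 p * M.P p.1 p.2 x)
          + b * ∑ p : X × A, μ2 p * M.P p.1 p.2 x)
        = (a + b) * ((1 - M.γ) * M.ν x) from by ring, hab, one_mul]
    rw [one_div, inv_mul_eq_div, mul_div_cancel_left₀ _ M.one_sub_gamma_pos.ne']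
  · intro j
    have haff : hvec M c πE (a • μ1 + b • μ2) j
        = a * hvec M c πE μ1 j + b * hvec M c πE μ2 j := by
      unfold hvec
      rw [Finset.mul_sum, Finset.mul_sum, ← Finset.sum_add_distrib]
      refine Finset.sum_congr rfl fun p _ => ?_
      simp only [Pi.add_apply, Pi.smul_apply, smul_eq_mul]
      linear_combination (M.occ πE p * c j p) * hab
    simp only [Pi.add_apply, Pi.smul_apply, smul_eq_mul]
    rw [haff]
    exact add_le_add (mul_le_mul_of_nonneg_left (hle1 j) ha)
      (mul_le_mul_of_nonneg_left (hle2 j) hb)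

lemma upC_closed : IsClosed (upC M c πE) := by
  have horth : IsClosed {y : Fin nc → ℝ | ∀ j, 0 ≤ y j} := by
    have : {y : Fin nc → ℝ | ∀ j, 0 ≤ y j} = ⋂ j, {y : Fin nc → ℝ | 0 ≤ y j} := by
      ext y; simp
    rw [this]
    exact isClosed_iInter fun j => isClosed_le continuous_const (continuous_apply j)
  have heq : upC M c πE = (hvec M c πE '' flowSet M) + {y : Fin nc → ℝ | ∀ j, 0 ≤ y j} := by
    ext y
    constructor
    · rintro ⟨μ, hμ, hle⟩
      exact Set.mem_add.mpr ⟨hvec M c πE μ, ⟨μ, hμ, rfl⟩, y - hvec M c πE μ,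
        fun j => sub_nonneg.mpr (hle j), by abel⟩
    · intro hy
      obtain ⟨v, ⟨μ, hμ, rfl⟩, z, hz, rfl⟩ := Set.mem_add.mp hy
      exact ⟨μ, hμ, fun j => le_add_of_nonneg_right (hz j)⟩
  rw [heq]
  exact IsClosed.add_left_of_isCompact horth
    ((flowSet_compact M).image (hvec_cont M c πE))

lemma exists_wstar [Nonempty (Fin nc)] (r : ℝ)
    (hr : ∀ μ ∈ flowSet M, ∃ j, r ≤ hvec M c πE μ j)
    {ε : ℝ} (hε : 0 < ε) :
    ∃ w : Fin nc → ℝ, simplexPt w ∧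
      ∀ μ ∈ flowSet M, r - ε ≤ ∑ j, w j * hvec M c πE μ j := by
  classical
  set C := upC M c πE with hCdef
  have hzC : (fun _ : Fin nc => r - ε) ∉ C := by
    rintro ⟨μ, hμ, hle⟩
    obtain ⟨j, hj⟩ := hr μ hμ
    have := hle j
    simp only at this
    linarith
  obtain ⟨f, u, hfz, hfC⟩ :=
    geometric_hahn_banach_point_closed (upC_convex M c πE) (upC_closed M c πE) hzC
  set φ : Fin nc → ℝ := fun j => f (Pi.single j 1) with hφdef
  have hf_eq : ∀ y : Fin nc → ℝ, f y = ∑ j, y j * φ j := by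
    intro y
    conv_lhs => rw [show y = ∑ j, Pi.single j (y j) from (Finset.univ_sum_single y).symm]
    rw [map_sum]
    refine Finset.sum_congr rfl fun j _ => ?_
    have : Pi.single j (y j) = y j • (Pi.single j 1 : Fin nc → ℝ) := by
      rw [← Pi.single_smul, smul_eq_mul, mul_one]
    rw [this, map_smul, smul_eq_mul]
  have hφapp : ∀ j, f (Pi.single j 1) = φ j := fun j => rfl
  -- a point of C coming from the uniform policy
  have hπu : FinMDP.IsPolicy (fun (_ : X) (_ : A) => (1:ℝ) / Fintype.card A) := by
    constructor
    · intro x a; positivity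
    · intro x
      rw [Finset.sum_const, Finset.card_univ, nsmul_eq_mul, mul_one_div, div_self]
      exact_mod_cast Fintype.card_ne_zero
  have hμ0 : M.occ (fun (_ : X) (_ : A) => (1:ℝ) / Fintype.card A) ∈ flowSet M :=
    flowSet_occ M hπu
  set y0 : Fin nc → ℝ := hvec M c πE (M.occ fun (_ : X) (_ : A) => (1:ℝ) / Fintype.card A)
    with hy0def
  have hy0C : y0 ∈ C := ⟨_, hμ0, fun j => le_refl _⟩
  have hφ : ∀ j, 0 ≤ φ j := by
    intro j
    by_contra hneg
    push_neg at hneg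
    have hy0u : u < f y0 := hfC y0 hy0C
    set t : ℝ := (f y0 - u) / (-φ j) with htdef
    have hφpos : 0 < -φ j := by linarith
    have ht0 : 0 ≤ t := (div_pos (by linarith) hφpos).le
    have hyt : y0 + t • (Pi.single j 1 : Fin nc → ℝ) ∈ C := by
      obtain ⟨μ, hμ, hle⟩ := hy0C
      refine ⟨μ, hμ, fun i => (hle i).trans ?_⟩
      simp only [Pi.add_apply, Pi.smul_apply, smul_eq_mul]
      have hnn : 0 ≤ t * (Pi.single j 1 : Fin nc → ℝ) i := by
        refine mul_nonneg ht0 ?_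
        rcases eq_or_ne i j with rfl | hij
        · simp
        · rw [Pi.single_eq_of_ne hij]
      linarith
    have hlt := hfC _ hyt
    rw [map_add, map_smul, smul_eq_mul, hφapp j] at hlt
    have h1 : t * -φ j = f y0 - u := div_mul_cancel₀ _ hφpos.ne'
    have h2 : t * φ j = -(t * -φ j) := by ring
    rw [h1] at h2
    rw [h2] at hlt
    linarith
  have hφsum : 0 < ∑ j, φ j := by
    rcases lt_or_eq_of_le (Finset.sum_nonneg fun j _ => hφ j) with hlt | heq
    · exact hlt
    · exfalso
      have hall : ∀ j ∈ Finset.univ, φ j = 0 :=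
        (Finset.sum_eq_zero_iff_of_nonneg fun j _ => hφ j).mp heq.symm
      have hz0 : f (fun _ => r - ε) = 0 := by
        rw [hf_eq]
        exact Finset.sum_eq_zero fun j _ => by rw [hall j (Finset.mem_univ j), mul_zero]
      have hy00 : f y0 = 0 := by
        rw [hf_eq]
        exact Finset.sum_eq_zero fun j _ => by rw [hall j (Finset.mem_univ j), mul_zero]
      have := hfC y0 hy0C
      rw [hy00] at this
      rw [hz0] at hfz
      linarith
  refine ⟨fun j => φ j / ∑ i, φ i, ⟨fun j => div_nonneg (hφ j) hφsum.le, ?_⟩, ?_⟩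
  · rw [← Finset.sum_div, div_self hφsum.ne']
  · intro μ hμ
    have hmem : hvec M c πE μ ∈ C := ⟨μ, hμ, fun j => le_refl _⟩
    have h1 : u < f (hvec M c πE μ) := hfC _ hmem
    have h2 : f (fun _ => r - ε) = (r - ε) * ∑ j, φ j := by
      rw [hf_eq, ← Finset.mul_sum]
    rw [hf_eq] at h1
    rw [h2] at hfz
    have hrw : ∑ j, (φ j / ∑ i, φ i) * hvec M c πE μ j
        = (∑ j, hvec M c πE μ j * φ j) / ∑ i, φ i := by
      rw [Finset.sum_div]
      exact Finset.sum_congr rfl fun j _ => by ring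
    rw [hrw, le_div_iff₀ hφsum]
    linarith

lemma dualObj_split (hπE : FinMDP.IsPolicy πE) (u : X → ℝ) (w : Fin nc → ℝ) :
    dualObj M c πE u w
      = (∑ x, M.ν x * u x) - ∑ p : X × A, M.occ πE p * costW c w p := by
  unfold dualObj
  have e : ∑ p : X × A, M.occ πE p * (M.Tadj u p - costW c w p)
      = (∑ p : X × A, M.occ πE p * M.Tadj u p)
        - ∑ p : X × A, M.occ πE p * costW c w p := by
    rw [← Finset.sum_sub_distrib]
    exact Finset.sum_congr rfl fun p _ => by ring
  rw [e, M.sum_mul_Tadj (M.occ πE) u, M.Tflow_occ hπE]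

lemma costW_swap (w : Fin nc → ℝ) (d : X × A → ℝ) :
    ∑ j, w j * ∑ p : X × A, d p * c j p = ∑ p : X × A, d p * costW c w p := by
  unfold costW
  simp only [Finset.mul_sum]
  rw [Finset.sum_comm]
  exact Finset.sum_congr rfl fun p _ => Finset.sum_congr rfl fun j _ => by ring

lemma hvec_pair (w : Fin nc → ℝ) (μ : X × A → ℝ) :
    ∑ j, w j * hvec M c πE μ j
      = (∑ p : X × A, μ p * costW c w p) - ∑ p : X × A, M.occ πE p * costW c w p := by
  calc ∑ j, w j * hvec M c πE μ j
      = ∑ p : X × A, (μ p - M.occ πE p) * costW c w p :=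
        costW_swap c w (fun p => μ p - M.occ πE p)
    _ = _ := by
        rw [← Finset.sum_sub_distrib]
        exact Finset.sum_congr rfl fun p _ => by ring

lemma gapMax_le_dualObj [NeZero nc] (πA : X → A → ℝ) (hπE : FinMDP.IsPolicy πE)
    (hA : IsApprentice M c πE πA)
    (uA : X → ℝ) (wA : Fin nc → ℝ) (hdual : dualOptimal M c πE uA wA) :
    gapMax M c πE πA ≤ dualObj M c πE uA wA := by
  haveI : Nonempty (Fin nc) := ⟨⟨0, Nat.pos_of_ne_zero (NeZero.ne nc)⟩⟩
  refine le_of_forall_pos_le_add fun ε hε => ?_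
  have hr : ∀ μ ∈ flowSet M, ∃ j, gapMax M c πE πA ≤ hvec M c πE μ j := by
    intro μ hμ
    have hπ' : FinMDP.IsPolicy (inducedPolicy μ) := FinMDP.inducedPolicy_isPolicy μ hμ.1
    have hocc : M.occ (inducedPolicy μ) = μ := M.occ_of_flow μ hμ.1 hμ.2
    have hle : gapMax M c πE πA ≤ gapMax M c πE (inducedPolicy μ) := hA.2 _ hπ'
    obtain ⟨j, _, hj⟩ := Finset.exists_mem_eq_sup' (Finset.univ_nonempty (α := Fin nc))
      (fun j => M.cost (c j) (inducedPolicy μ) - M.cost (c j) πE)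
    refine ⟨j, ?_⟩
    have hgapdef : gapMax M c πE (inducedPolicy μ) = Finset.univ.sup' Finset.univ_nonempty
        (fun j => M.cost (c j) (inducedPolicy μ) - M.cost (c j) πE) := rfl
    have hcost : M.cost (c j) (inducedPolicy μ) = ∑ p : X × A, μ p * c j p := by
      unfold FinMDP.cost
      rw [hocc]
    have hcostE : M.cost (c j) πE = ∑ p : X × A, M.occ πE p * c j p := rfl
    rw [hvec_split, ← hcost, ← hcostE]
    calc gapMax M c πE πA ≤ gapMax M c πE (inducedPolicy μ) := hle
      _ = M.cost (c j) (inducedPolicy μ) - M.cost (c j) πE := by rw [hgapdef, hj]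
  obtain ⟨w, hw, hkey⟩ := exists_wstar M c πE (gapMax M c πE πA) hr hε
  obtain ⟨u', π', hπ', hfeas, hval⟩ := M.exists_dual_feasible_value (costW c w)
  have hμ' : M.occ π' ∈ flowSet M := flowSet_occ M hπ'
  have hobj : dualObj M c πE u' w = ∑ j, w j * hvec M c πE (M.occ π') j := by
    rw [dualObj_split M c πE hπE u' w, ← hval, hvec_pair M c πE w (M.occ π')]
  have h1 : gapMax M c πE πA - ε ≤ dualObj M c πE u' w := by
    rw [hobj]; exact hkey _ hμ'
  have hfeas' : dualFeasible M c u' w := ⟨hw, fun p => sub_nonneg.mpr (hfeas p)⟩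
  have h2 := hdual.2 u' w hfeas'
  linarith

end Stage4


/-- Realizability implies zero weak approximation error: if `(u_A, w_A)`
is dual optimal, `μ_{π_A} = Φθ_A` and `u_A = Ψλ_A`, then `(θ_A, λ_A, w_A)` is a
saddle point of the linearly-relaxed problem. -/
theorem realizability_saddle_point (M : FinMDP X A) {nm nu nc : ℕ} [NeZero nc]
    (Φ : Fin nm → X × A → ℝ) (hΦ : ∀ i, IsDist (Φ i))
    (Ψ : Fin nu → X → ℝ) (hΨ : ∀ k x, |Ψ k x| ≤ 1)
    (c : Fin nc → X × A → ℝ) (hc : ∀ j p, |c j p| ≤ 1)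
    (β : ℝ) (hβ : 2 ≤ β)
    (πE : X → A → ℝ) (hπE : FinMDP.IsPolicy πE)
    (uA : X → ℝ) (wA : Fin nc → ℝ)
    (hdual : dualOptimal M c πE uA wA)
    (πA : X → A → ℝ) (hA : IsApprentice M c πE πA)
    (θA : Fin nm → ℝ) (hθA : simplexPt θA)
    (hreal₁ : (fun p : X × A => ∑ i, θA i * Φ i p) = M.occ πA)
    (lamA : Fin nu → ℝ) (hlamA : lamA ∈ lamSet nu β)
    (hreal₂ : (fun x => ∑ k, lamA k * Ψ k x) = uA) :
    (∀ lam ∈ lamSet nu β, ∀ w, simplexPt w →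
      Lr M Φ Ψ c πE θA lam w ≤ Lr M Φ Ψ c πE θA lamA wA) ∧
    (∀ θ, simplexPt θ →
      Lr M Φ Ψ c πE θA lamA wA ≤ Lr M Φ Ψ c πE θ lamA wA) := by
  classical
  haveI : Nonempty (Fin nc) := ⟨⟨0, Nat.pos_of_ne_zero (NeZero.ne nc)⟩⟩
  have hπA : FinMDP.IsPolicy πA := hA.1
  have hwA : simplexPt wA := hdual.1.1
  have hfeaswA : ∀ p, 0 ≤ costW c wA p - M.Tadj uA p := hdual.1.2
  have hTsum : ∀ (u : X → ℝ) (π : X → A → ℝ), FinMDP.IsPolicy π →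
      ∑ p : X × A, M.occ π p * M.Tadj u p = ∑ x, M.ν x * u x := by
    intro u π hπ
    rw [M.sum_mul_Tadj (M.occ π) u, M.Tflow_occ hπ]
  -- L_r(θ_A, λ, w) depends only on w
  have hLrθA : ∀ (lam : Fin nu → ℝ) (w : Fin nc → ℝ),
      Lr M Φ Ψ c πE θA lam w = ∑ j, w j * hvec M c πE (M.occ πA) j := by
    intro lam w
    unfold Lr
    have hsplit : ∑ p : X × A, ((∑ i, θA i * Φ i p) - M.occ πE p) *
        ((∑ j, w j * c j p) - M.Tadj (fun x => ∑ k, lam k * Ψ k x) p)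
        = (∑ p : X × A, (M.occ πA p - M.occ πE p) * ∑ j, w j * c j p)
          - ((∑ p : X × A, M.occ πA p * M.Tadj (fun x => ∑ k, lam k * Ψ k x) p)
            - ∑ p : X × A, M.occ πE p * M.Tadj (fun x => ∑ k, lam k * Ψ k x) p) := by
      simp only [← Finset.sum_sub_distrib]
      refine Finset.sum_congr rfl fun p _ => ?_
      rw [congrFun hreal₁ p]
      ring
    rw [hsplit, hTsum _ πA hπA, hTsum _ πE hπE, sub_self, sub_zero]
    calc ∑ p : X × A, (M.occ πA p - M.occ πE p) * ∑ j, w j * c j p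
        = ∑ p : X × A, (M.occ πA p - M.occ πE p) * costW c w p := rfl
      _ = ∑ j, w j * hvec M c πE (M.occ πA) j :=
          (costW_swap c w (fun p => M.occ πA p - M.occ πE p)).symm
  -- the crux inequality from LP duality
  have hgap : gapMax M c πE πA ≤ dualObj M c πE uA wA :=
    gapMax_le_dualObj M c πE πA hπE hA uA wA hdual
  -- dual objective is below the wA-weighted gap
  have hGwA : dualObj M c πE uA wA ≤ ∑ j, wA j * hvec M c πE (M.occ πA) j := by
    rw [dualObj_split M c πE hπE uA wA, hvec_pair M c πE wA (M.occ πA)]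
    have h0 : 0 ≤ ∑ p : X × A, M.occ πA p * (costW c wA p - M.Tadj uA p) :=
      Finset.sum_nonneg fun p _ => mul_nonneg (M.occ_nonneg hπA p) (hfeaswA p)
    have hsplit2 : ∑ p : X × A, M.occ πA p * (costW c wA p - M.Tadj uA p)
        = (∑ p : X × A, M.occ πA p * costW c wA p)
          - ∑ p : X × A, M.occ πA p * M.Tadj uA p := by
      rw [← Finset.sum_sub_distrib]
      exact Finset.sum_congr rfl fun p _ => by ring
    have h3 := hTsum uA πA hπA
    rw [hsplit2, h3] at h0
    linarith
  -- weighted gaps are below the max gap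
  have hwle : ∀ w : Fin nc → ℝ, simplexPt w →
      ∑ j, w j * hvec M c πE (M.occ πA) j ≤ gapMax M c πE πA := by
    intro w hw
    have hgapdef : gapMax M c πE πA = Finset.univ.sup' Finset.univ_nonempty
        (fun j => M.cost (c j) πA - M.cost (c j) πE) := rfl
    have hhj : ∀ j, hvec M c πE (M.occ πA) j ≤ gapMax M c πE πA := by
      intro j
      have he : hvec M c πE (M.occ πA) j = M.cost (c j) πA - M.cost (c j) πE := by
        rw [hvec_split]; rfl
      rw [he, hgapdef]
      exact Finset.le_sup' (fun j => M.cost (c j) πA - M.cost (c j) πE) (Finset.mem_univ j)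
    calc ∑ j, w j * hvec M c πE (M.occ πA) j
        ≤ ∑ j, w j * gapMax M c πE πA :=
          Finset.sum_le_sum fun j _ => mul_le_mul_of_nonneg_left (hhj j) (hw.1 j)
      _ = gapMax M c πE πA := by rw [← Finset.sum_mul, hw.2, one_mul]
  have hsq1 : ∑ j, wA j * hvec M c πE (M.occ πA) j = gapMax M c πE πA :=
    le_antisymm (hwle wA hwA) (by linarith)
  have hLrA : Lr M Φ Ψ c πE θA lamA wA = gapMax M c πE πA := by
    rw [hLrθA lamA wA, hsq1]
  constructor
  · intro lam _ w hw
    rw [hLrθA lam w, hLrA]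
    exact hwle w hw
  · intro θ hθ
    rw [hLrA]
    have hθform : Lr M Φ Ψ c πE θ lamA wA
        = (∑ p : X × A, (∑ i, θ i * Φ i p) * (costW c wA p - M.Tadj uA p))
          + dualObj M c πE uA wA := by
      unfold Lr
      rw [hreal₂]
      unfold dualObj costW
      rw [← Finset.sum_add_distrib]
      exact Finset.sum_congr rfl fun p _ => by ring
    rw [hθform]
    have h0 : 0 ≤ ∑ p : X × A, (∑ i, θ i * Φ i p) * (costW c wA p - M.Tadj uA p) :=
      Finset.sum_nonneg fun p _ => mul_nonneg
        (Finset.sum_nonneg fun i _ => mul_nonneg (hθ.1 i) ((hΦ i).1 p)) (hfeaswA p)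
    linarith
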